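/- (Sinkhorn's theorem) Let C be an n×n matrix with strictly positive entries. Then there exist diagonal matrices D₁ and D₂ with strictly positive diagonal entries such that P = D₁ C D₂ is doubly stochastic, and P is the unique doubly stochastic matrix of this form. Moreover, D₁ and D₂ are unique up to a scalar factor: if D₁′ and D₂′ are positive diagonal matrices with D₁′ C D₂′ doubly stochastic, then there is α > 0 with D₁ = α D₁′ and α D₂ = D₂′. -/

import Mathlib

open Matrix Finset

open Finset

private lemma log_affine_deriv (y c : ℝ) (hy : y ≠ 0) :
    HasDerivAt (fun t => Real.log (y + t * c)) (c / y) 0 := by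
  have h : HasDerivAt (fun t : ℝ => y + t * c) c 0 := by
    simpa using ((hasDerivAt_id (0:ℝ)).mul_const c).const_add y
  simpa using h.log (by simpa using hy)

lemma sinkhorn_exists (n : ℕ) [NeZero n] (C : Matrix (Fin n) (Fin n) ℝ)
    (hCpos : ∀ i j, 0 < C i j) :
    ∃ d₁ d₂ : Fin n → ℝ, (∀ i, 0 < d₁ i) ∧ (∀ i, 0 < d₂ i) ∧
      (∀ i, ∑ j, d₁ i * C i j * d₂ j = 1) ∧ (∀ j, ∑ i, d₁ i * C i j * d₂ j = 1) := by
  have hn0 : (0:ℝ) < n := by exact_mod_cast Nat.pos_of_ne_zero (NeZero.ne n)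
  set S := stdSimplex ℝ (Fin n) with hS
  have hden : ∀ x : Fin n → ℝ, (∀ j, 0 ≤ x j) → (∑ j, x j) ≠ 0 →
      ∀ i, 0 < ∑ j, C i j * x j := by
    intro x hx hs i
    have hex : ∃ j, 0 < x j := by
      by_contra h; push_neg at h
      exact hs (Finset.sum_eq_zero fun j _ => le_antisymm (h j) (hx j))
    obtain ⟨j0, hj0⟩ := hex
    exact Finset.sum_pos' (fun j _ => mul_nonneg (hCpos i j).le (hx j))
      ⟨j0, Finset.mem_univ _, mul_pos (hCpos i j0) hj0⟩
  have hdenS : ∀ x ∈ S, ∀ i, 0 < ∑ j, C i j * x j := by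
    intro x hx i
    exact hden x hx.1 (by rw [hx.2]; norm_num) i
  set g : (Fin n → ℝ) → ℝ := fun x => (∏ j, x j) / ∏ i, ∑ j, C i j * x j with hg
  have hcont : ContinuousOn g S := by
    apply ContinuousOn.div
    · exact (continuous_finset_prod _ fun j _ => continuous_apply j).continuousOn
    · exact (continuous_finset_prod _ fun i _ =>
        continuous_finset_sum _ fun j _ =>
          continuous_const.mul (continuous_apply j)).continuousOn
    · intro x hx
      exact ne_of_gt (Finset.prod_pos fun i _ => hdenS x hx i)
  have hu : (fun _ : Fin n => (n : ℝ)⁻¹) ∈ S := by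
    refine ⟨fun j => (inv_pos.mpr hn0).le, ?_⟩
    simp [Finset.sum_const]
  obtain ⟨y, hyS, hymax⟩ := (isCompact_stdSimplex ℝ (Fin n)).exists_isMaxOn ⟨_, hu⟩ hcont
  have hgu : 0 < g (fun _ : Fin n => (n : ℝ)⁻¹) := by
    apply div_pos
    · exact Finset.prod_pos fun j _ => inv_pos.mpr hn0
    · exact Finset.prod_pos fun i _ => hdenS _ hu i
  have hgy : 0 < g y := lt_of_lt_of_le hgu (hymax hu)
  have hAy : ∀ i, 0 < ∑ j, C i j * y j := hdenS y hyS
  have hnum : 0 < ∏ j, y j := by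
    have hd : 0 < ∏ i, ∑ j, C i j * y j := Finset.prod_pos fun i _ => hAy i
    by_contra h
    push_neg at h
    have : g y ≤ 0 := div_nonpos_of_nonpos_of_nonneg h hd.le
    linarith
  have ypos : ∀ j, 0 < y j := by
    intro j
    rcases lt_or_eq_of_le (hyS.1 j) with h | h
    · exact h
    · exfalso
      have : ∏ j, y j = 0 := Finset.prod_eq_zero (Finset.mem_univ j) h.symm
      rw [this] at hnum; exact lt_irrefl _ hnum
  set A : Fin n → ℝ := fun i => ∑ j, C i j * y j with hA
  set L : (Fin n → ℝ) → ℝ := fun x =>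
    (∑ j, Real.log (x j)) - ∑ i, Real.log (∑ j, C i j * x j) with hL
  have hLg : ∀ x : Fin n → ℝ, (∀ j, 0 < x j) → L x = Real.log (g x) := by
    intro x hx
    have hAx : ∀ i, 0 < ∑ j, C i j * x j := fun i =>
      Finset.sum_pos (fun j _ => mul_pos (hCpos i j) (hx j)) univ_nonempty
    have h1 : Real.log (∏ j, x j) = ∑ j, Real.log (x j) :=
      Real.log_prod fun j _ => (hx j).ne'
    have h2 : Real.log (∏ i, ∑ j, C i j * x j) = ∑ i, Real.log (∑ j, C i j * x j) :=
      Real.log_prod fun i _ => (hAx i).ne'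
    rw [hg]
    rw [Real.log_div (Finset.prod_pos fun j _ => hx j).ne'
      (Finset.prod_pos fun i _ => hAx i).ne', h1, h2]
  have hscale : ∀ c : ℝ, 0 < c → ∀ x : Fin n → ℝ, (∀ j, 0 < x j) →
      L (fun j => c * x j) = L x := by
    intro c hc x hx
    have hAx : ∀ i, 0 < ∑ j, C i j * x j := fun i =>
      Finset.sum_pos (fun j _ => mul_pos (hCpos i j) (hx j)) univ_nonempty
    have h1 : ∀ j, Real.log (c * x j) = Real.log c + Real.log (x j) := fun j =>
      Real.log_mul hc.ne' (hx j).ne'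
    have h2 : ∀ i, (∑ j, C i j * (c * x j)) = c * ∑ j, C i j * x j := by
      intro i; rw [Finset.mul_sum]; exact Finset.sum_congr rfl fun j _ => by ring
    simp only [hL, h1, h2]
    rw [Finset.sum_add_distrib]
    have h3 : ∀ i, Real.log (c * ∑ j, C i j * x j)
        = Real.log c + Real.log (∑ j, C i j * x j) := fun i =>
      Real.log_mul hc.ne' (hAx i).ne'
    simp only [h3]
    rw [Finset.sum_add_distrib]
    ring
  have hLle : ∀ z : Fin n → ℝ, (∀ j, 0 < z j) → L z ≤ L y := by
    intro z hz
    have hs : 0 < ∑ j, z j := Finset.sum_pos (fun j _ => hz j) univ_nonempty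
    set w : Fin n → ℝ := fun j => (∑ j, z j)⁻¹ * z j with hw
    have hwpos : ∀ j, 0 < w j := fun j => mul_pos (inv_pos.mpr hs) (hz j)
    have hwS : w ∈ S := by
      refine ⟨fun j => (hwpos j).le, ?_⟩
      rw [hw]
      simp only
      rw [← Finset.mul_sum, inv_mul_cancel₀ hs.ne']
    have hgw : 0 < g w :=
      div_pos (Finset.prod_pos fun j _ => hwpos j)
        (Finset.prod_pos fun i _ => hdenS w hwS i)
    calc L z = L w := (hscale _ (inv_pos.mpr hs) z hz).symm
      _ = Real.log (g w) := hLg w hwpos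
      _ ≤ Real.log (g y) := Real.log_le_log hgw (hymax hwS)
      _ = L y := (hLg y ypos).symm
  have hcond : ∀ k, (∑ i, C i k / A i) = 1 / y k := by
    intro k
    set F : ℝ → ℝ := fun t => L (fun j => y j + t * (if j = k then 1 else 0)) with hF
    have hFeq : F = fun t => (∑ j, Real.log (y j + t * (if j = k then 1 else 0)))
        - ∑ i, Real.log (A i + t * C i k) := by
      funext t
      rw [hF]
      simp only [hL]
      congr 1
      apply Finset.sum_congr rfl
      intro i _
      congr 1
      have hterm : ∀ x : Fin n, C i x * (y x + t * if x = k then 1 else 0)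
          = C i x * y x + (if x = k then t * C i k else 0) := by
        intro x
        by_cases h : x = k
        · subst h; simp only [eq_self_iff_true, if_true]; ring
        · simp [h]
      rw [Finset.sum_congr rfl fun x _ => hterm x, Finset.sum_add_distrib,
        Finset.sum_ite_eq' univ k fun _ => t * C i k]
      simp [hA]
    have hmax : IsLocalMax F 0 := by
      have key : ∀ t : ℝ, |t| < y k → F t ≤ F 0 := by
        intro t ht
        have hpos : ∀ j, 0 < y j + t * (if j = k then 1 else 0) := by
          intro j
          by_cases h : j = k
          · subst h
            simp only [eq_self_iff_true, if_true, mul_one]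
            have := abs_lt.mp ht
            linarith
          · simpa [h] using ypos j
        have h0 : F 0 = L y := by rw [hF]; simp
        rw [h0, hF]
        exact hLle _ hpos
      have : ∀ᶠ t in nhds (0:ℝ), F t ≤ F 0 := by
        rw [Metric.eventually_nhds_iff]
        exact ⟨y k, ypos k, fun t ht => key t (by simpa [Real.dist_eq] using ht)⟩
      exact this
    have hD : HasDerivAt F ((∑ j, (if j = k then (1:ℝ) else 0) / y j)
        - ∑ i, C i k / A i) 0 := by
      rw [hFeq]
      apply HasDerivAt.sub
      · exact HasDerivAt.fun_sum fun j _ => log_affine_deriv (y j) _ (ypos j).ne'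
      · exact HasDerivAt.fun_sum fun i _ => log_affine_deriv (A i) _ (hAy i).ne'
    have hzero := hmax.hasDerivAt_eq_zero hD
    have hsum : (∑ j, (if j = k then (1:ℝ) else 0) / y j) = 1 / y k := by
      have h : ∀ j : Fin n, (if j = k then (1:ℝ) else 0) / y j
          = if j = k then 1 / y k else 0 := by
        intro j; by_cases h : j = k
        · subst h; simp
        · simp [h]
      rw [Finset.sum_congr rfl fun j _ => h j,
        Finset.sum_ite_eq' univ k fun _ => 1 / y k]
      simp
    rw [hsum] at hzero
    linarith
  refine ⟨fun i => (A i)⁻¹, y, fun i => inv_pos.mpr (hAy i), ypos, ?_, ?_⟩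
  · intro i
    have h : ∀ j, (A i)⁻¹ * C i j * y j = (A i)⁻¹ * (C i j * y j) := fun j => by ring
    rw [Finset.sum_congr rfl fun j _ => h j, ← Finset.mul_sum]
    exact inv_mul_cancel₀ (hAy i).ne'
  · intro j
    have h : ∀ i, (A i)⁻¹ * C i j * y j = (C i j / A i) * y j := fun i => by ring
    rw [Finset.sum_congr rfl fun i _ => h i, ← Finset.sum_mul, hcond j, one_div,
      inv_mul_cancel₀ (ypos j).ne']


lemma sinkhorn_unique (n : ℕ) [NeZero n] (C : Matrix (Fin n) (Fin n) ℝ)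
    (hCpos : ∀ i j, 0 < C i j)
    (d₁ d₂ e₁ e₂ : Fin n → ℝ)
    (hd₁ : ∀ i, 0 < d₁ i) (hd₂ : ∀ i, 0 < d₂ i)
    (he₁ : ∀ i, 0 < e₁ i) (he₂ : ∀ i, 0 < e₂ i)
    (hdr : ∀ i, ∑ j, d₁ i * C i j * d₂ j = 1)
    (hdc : ∀ j, ∑ i, d₁ i * C i j * d₂ j = 1)
    (her : ∀ i, ∑ j, e₁ i * C i j * e₂ j = 1)
    (hec : ∀ j, ∑ i, e₁ i * C i j * e₂ j = 1) :
    ∃ α : ℝ, 0 < α ∧ (∀ i, d₁ i = α * e₁ i) ∧ (∀ i, α * d₂ i = e₂ i) := by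
  set Q : Matrix (Fin n) (Fin n) ℝ := fun i j => e₁ i * C i j * e₂ j with hQ
  set r : Fin n → ℝ := fun i => d₁ i / e₁ i with hr
  set s : Fin n → ℝ := fun j => d₂ j / e₂ j with hs
  have hQpos : ∀ i j, 0 < Q i j := fun i j =>
    mul_pos (mul_pos (he₁ i) (hCpos i j)) (he₂ j)
  have hrpos : ∀ i, 0 < r i := fun i => div_pos (hd₁ i) (he₁ i)
  have hspos : ∀ j, 0 < s j := fun j => div_pos (hd₂ j) (he₂ j)
  have hkey : ∀ i j, d₁ i * C i j * d₂ j = Q i j * r i * s j := by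
    intro i j
    have h1 := (he₁ i).ne'
    have h2 := (he₂ j).ne'
    rw [hQ, hr, hs]
    field_simp
  have hPr : ∀ i, ∑ j, Q i j * r i * s j = 1 := by
    intro i; rw [← hdr i]; exact Finset.sum_congr rfl fun j _ => (hkey i j).symm
  have hPc : ∀ j, ∑ i, Q i j * r i * s j = 1 := by
    intro j; rw [← hdc j]; exact Finset.sum_congr rfl fun i _ => (hkey i j).symm
  obtain ⟨i₀, -, hi₀⟩ := Finset.exists_max_image (univ : Finset (Fin n)) r univ_nonempty
  obtain ⟨j₀, -, hj₀⟩ := Finset.exists_min_image (univ : Finset (Fin n)) s univ_nonempty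
  set M := r i₀ with hM
  set m := s j₀ with hm
  have hMpos : 0 < M := hrpos i₀
  have hmpos : 0 < m := hspos j₀
  -- M * m ≤ 1
  have h1 : M * m ≤ 1 := by
    calc M * m = (M * m) * ∑ j, Q i₀ j := by rw [her i₀]; ring
    _ = ∑ j, Q i₀ j * M * m := by rw [Finset.mul_sum]; exact Finset.sum_congr rfl fun j _ => by ring
    _ ≤ ∑ j, Q i₀ j * M * s j := by
        apply Finset.sum_le_sum
        intro j _
        exact mul_le_mul_of_nonneg_left (hj₀ j (Finset.mem_univ j))
          (mul_pos (hQpos i₀ j) hMpos).le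
    _ = ∑ j, Q i₀ j * r i₀ * s j := rfl
    _ = 1 := hPr i₀
  -- 1 ≤ M * m
  have h2 : 1 ≤ M * m := by
    calc (1:ℝ) = ∑ i, Q i j₀ * r i * s j₀ := (hPc j₀).symm
    _ ≤ ∑ i, Q i j₀ * M * m := by
        apply Finset.sum_le_sum
        intro i _
        rw [← hm]
        exact mul_le_mul_of_nonneg_right
          (mul_le_mul_of_nonneg_left (hi₀ i (Finset.mem_univ i)) (hQpos i j₀).le) hmpos.le
    _ = (M * m) * ∑ i, Q i j₀ := by rw [Finset.mul_sum]; exact Finset.sum_congr rfl fun i _ => by ring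
    _ = M * m := by rw [hec j₀]; ring
  have hMm : M * m = 1 := le_antisymm h1 h2
  -- equality case: s is constant equal to m
  have hscon : ∀ j, s j = m := by
    intro j
    by_contra hne
    have hlt : m < s j := lt_of_le_of_ne (hj₀ j (Finset.mem_univ j)) (Ne.symm hne)
    have hstrict : ∑ j, Q i₀ j * M * m < ∑ j, Q i₀ j * M * s j := by
      apply Finset.sum_lt_sum (fun k _ => mul_le_mul_of_nonneg_left
        (hj₀ k (Finset.mem_univ k)) (mul_pos (hQpos i₀ k) hMpos).le)
      exact ⟨j, Finset.mem_univ j, by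
        exact mul_lt_mul_of_pos_left hlt (mul_pos (hQpos i₀ j) hMpos)⟩
    have hl : ∑ j, Q i₀ j * M * m = M * m := by
      calc ∑ j, Q i₀ j * M * m = (M * m) * ∑ j, Q i₀ j := by
            rw [Finset.mul_sum]; exact Finset.sum_congr rfl fun j _ => by ring
      _ = M * m := by rw [her i₀]; ring
    have hrr : ∑ j, Q i₀ j * M * s j = 1 := hPr i₀
    rw [hl, hrr, hMm] at hstrict
    exact lt_irrefl _ hstrict
  -- then r is constant equal to M
  have hrcon : ∀ i, r i = M := by
    intro i
    have : ∑ j, Q i j * r i * s j = r i * m := by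
      calc ∑ j, Q i j * r i * s j = ∑ j, Q i j * r i * m :=
            Finset.sum_congr rfl fun j _ => by rw [hscon j]
      _ = (r i * m) * ∑ j, Q i j := by
            rw [Finset.mul_sum]; exact Finset.sum_congr rfl fun j _ => by ring
      _ = r i * m := by rw [her i]; ring
    have h1 : r i * m = 1 := by rw [← this]; exact hPr i
    have h2 : M * m = 1 := hMm
    have : r i * m = M * m := by rw [h1, h2]
    exact mul_right_cancel₀ hmpos.ne' this
  refine ⟨M, hMpos, ?_, ?_⟩
  · intro i
    have h := hrcon i
    rw [hr] at h
    simp only at h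
    rw [div_eq_iff (he₁ i).ne'] at h
    rw [h]
  · intro i
    have := hscon i
    rw [hs] at this
    rw [div_eq_iff (he₂ i).ne'] at this
    have h2 : d₂ i = m * e₂ i := this
    rw [h2]
    have : M * m = 1 := hMm
    calc M * (m * e₂ i) = (M * m) * e₂ i := by ring
    _ = e₂ i := by rw [hMm]; ring

private lemma diag_mul_diag_apply {n : ℕ} (d e : Fin n → ℝ)
    (C : Matrix (Fin n) (Fin n) ℝ) (i j : Fin n) :
    (Matrix.diagonal d * C * Matrix.diagonal e) i j = d i * C i j * e j := by
  simp [Matrix.mul_diagonal, Matrix.diagonal_mul]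

/-- A doubly stochastic matrix: nonnegative with all row and column sums 1. -/
def IsDoublyStochastic {n : ℕ} (P : Matrix (Fin n) (Fin n) ℝ) : Prop :=
  (∀ i j, 0 ≤ P i j) ∧ (∀ i, ∑ j, P i j = 1) ∧ (∀ j, ∑ i, P i j = 1)

/-- Sinkhorn's theorem: a strictly positive matrix C can be
scaled by positive diagonal matrices to a doubly stochastic matrix; the doubly
stochastic matrix of this form is unique, and the diagonal scalings are unique
up to a scalar factor. -/
theorem sinkhorn (n : ℕ) (C : Matrix (Fin n) (Fin n) ℝ)
    (hCpos : ∀ i j, 0 < C i j) :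
    ∃ d₁ d₂ : Fin n → ℝ, (∀ i, 0 < d₁ i) ∧ (∀ i, 0 < d₂ i) ∧
      IsDoublyStochastic (Matrix.diagonal d₁ * C * Matrix.diagonal d₂) ∧
      ∀ e₁ e₂ : Fin n → ℝ, (∀ i, 0 < e₁ i) → (∀ i, 0 < e₂ i) →
        IsDoublyStochastic (Matrix.diagonal e₁ * C * Matrix.diagonal e₂) →
        (Matrix.diagonal e₁ * C * Matrix.diagonal e₂
          = Matrix.diagonal d₁ * C * Matrix.diagonal d₂) ∧
        ∃ α : ℝ, 0 < α ∧ (∀ i, d₁ i = α * e₁ i) ∧ (∀ i, α * d₂ i = e₂ i) := by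
  rcases Nat.eq_zero_or_pos n with hn | hn
  · subst hn
    refine ⟨fun _ => 1, fun _ => 1, fun i => i.elim0, fun i => i.elim0,
      ⟨fun i => i.elim0, fun i => i.elim0, fun j => j.elim0⟩, ?_⟩
    intro e₁ e₂ _ _ _
    refine ⟨?_, 1, one_pos, fun i => i.elim0, fun i => i.elim0⟩
    ext i j
    exact i.elim0
  · haveI : NeZero n := ⟨hn.ne'⟩
    obtain ⟨d₁, d₂, hd₁, hd₂, hrow, hcol⟩ := sinkhorn_exists n C hCpos
    refine ⟨d₁, d₂, hd₁, hd₂, ?_, ?_⟩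
    · refine ⟨fun i j => ?_, fun i => ?_, fun j => ?_⟩
      · rw [diag_mul_diag_apply]
        exact (mul_pos (mul_pos (hd₁ i) (hCpos i j)) (hd₂ j)).le
      · rw [Finset.sum_congr rfl fun j _ => diag_mul_diag_apply d₁ d₂ C i j]
        exact hrow i
      · rw [Finset.sum_congr rfl fun i _ => diag_mul_diag_apply d₁ d₂ C i j]
        exact hcol j
    · intro e₁ e₂ he₁ he₂ hDS
      obtain ⟨-, hr, hc⟩ := hDS
      have her : ∀ i, ∑ j, e₁ i * C i j * e₂ j = 1 := by
        intro i
        rw [← hr i]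
        exact Finset.sum_congr rfl fun j _ => (diag_mul_diag_apply e₁ e₂ C i j).symm
      have hec : ∀ j, ∑ i, e₁ i * C i j * e₂ j = 1 := by
        intro j
        rw [← hc j]
        exact Finset.sum_congr rfl fun i _ => (diag_mul_diag_apply e₁ e₂ C i j).symm
      obtain ⟨α, hα, h1, h2⟩ :=
        sinkhorn_unique n C hCpos d₁ d₂ e₁ e₂ hd₁ hd₂ he₁ he₂ hrow hcol her hec
      refine ⟨?_, α, hα, h1, h2⟩
      ext i j
      rw [diag_mul_diag_apply, diag_mul_diag_apply, h1 i, ← h2 j]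
      ring
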